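/- Let A = (Q_{2^{s_n}})^{i_n}(Q_{2^{s_{n−1}}})^{i_{n−1}}⋯(Q_{2^{s_1}})^{i_1} be an A-polynomial. If i_n = 2, then ∫ A dμ = ||Q_{2^{s_n}}||² · ∫ (Q_{2^{s_{n−1}}})^{i_{n−1}}⋯(Q_{2^{s_1}})^{i_1} dμ (where for n = 1 the remaining product is the constant 1). -/

import Mathlib

open Polynomial MeasureTheory Filter

/-- `r γ s` : the recursively defined scales `r 0 = 1`, `r (s+1) = γ (s+1) * (r s)²`. -/
noncomputable def r (γ : ℕ → ℝ) : ℕ → ℝ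
  | 0 => 1
  | s + 1 => γ (s + 1) * (r γ s) ^ 2

/-- `P γ s` : the polynomial `P_{2^s}`, with `P_1 = X - 1` and
`P_{2^{s+1}} = P_{2^s} · (P_{2^s} + r_s)`. -/
noncomputable def P (γ : ℕ → ℝ) : ℕ → Polynomial ℝ
  | 0 => X - 1
  | s + 1 => P γ s * (P γ s + C (r γ s))

/-- The integral `∫ f dν_s` of a function `f` against the normalized counting measure `ν_s`
on the `2^s` (simple, real) zeros of `P_{2^s} + r_s/2`. -/
noncomputable def nuInt (γ : ℕ → ℝ) (s : ℕ) (f : ℝ → ℝ) : ℝ :=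
  (((P γ s + C (r γ s / 2)).roots.map f).sum) / 2 ^ s

lemma r_pos' (γ : ℕ → ℝ) (hγ : ∀ s : ℕ, 0 < γ (s + 1) ∧ γ (s + 1) < 1 / 4) : ∀ s, 0 < r γ s := by
  intro s
  induction s with
  | zero => exact one_pos
  | succ s ih => exact mul_pos (hγ s).1 (pow_pos ih 2)

lemma P_monic (γ : ℕ → ℝ) : ∀ s, (P γ s).Monic ∧ (P γ s).natDegree = 2 ^ s := by
  intro s
  induction s with
  | zero =>
    refine ⟨by simpa [P] using monic_X_sub_C (1:ℝ), ?_⟩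
    show (X - C 1 : ℝ[X]).natDegree = 1
    exact natDegree_X_sub_C 1
  | succ s ih =>
    obtain ⟨hm, hd⟩ := ih
    have h2 : (0:ℕ) < 2 ^ s := pow_pos (by norm_num : (0:ℕ) < 2) s
    have hdegC : (C (r γ s) : ℝ[X]).degree < (P γ s).degree := by
      calc (C (r γ s) : ℝ[X]).degree ≤ 0 := degree_C_le
      _ < (P γ s).degree := by
          rw [degree_eq_natDegree hm.ne_zero, hd]; exact_mod_cast h2
    have hm2 : (P γ s + C (r γ s)).Monic := hm.add_of_left hdegC
    refine ⟨hm.mul hm2, ?_⟩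
    show (P γ s * (P γ s + C (r γ s))).natDegree = 2 ^ (s+1)
    rw [hm.natDegree_mul hm2, hd, natDegree_add_C, hd]
    ring

lemma factorP (γ : ℕ → ℝ) (hγ : ∀ s : ℕ, 0 < γ (s + 1) ∧ γ (s + 1) < 1 / 4)
    (s : ℕ) (c : ℝ) (h0 : 0 ≤ c) (h1 : c ≤ r γ (s+1)) :
    ∃ a b : ℝ, 0 ≤ b ∧ b ≤ a ∧ a ≤ r γ s ∧ a + b = r γ s ∧
      P γ (s+1) + C c = (P γ s + C a) * (P γ s + C b) := by
  set R := r γ s with hR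
  have hRpos : 0 < R := r_pos' γ hγ s
  have hdisc : 4 * c ≤ R ^ 2 := by
    have := (hγ s).2
    have h1' : c ≤ γ (s+1) * R ^ 2 := h1
    nlinarith [sq_nonneg R]
  set d := Real.sqrt (R ^ 2 - 4 * c) with hd
  have hd0 : 0 ≤ d := Real.sqrt_nonneg _
  have hdsq : d ^ 2 = R ^ 2 - 4 * c := Real.sq_sqrt (by linarith)
  have hdR : d ≤ R := by
    nlinarith [hdsq, hd0, hRpos]
  refine ⟨(R + d)/2, (R - d)/2, by linarith, by linarith, by linarith, by ring, ?_⟩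
  have hab : ((R + d)/2) * ((R - d)/2) = c := by nlinarith [hdsq]
  have key : (P γ s + C ((R+d)/2)) * (P γ s + C ((R-d)/2)) =
      P γ s * (P γ s + C R) + C c := by
    rw [← hab]
    have e1 : (C R : ℝ[X]) = C ((R+d)/2) + C ((R-d)/2) := by rw [← C_add]; ring_nf
    have e2 : (C (((R+d)/2) * ((R-d)/2)) : ℝ[X]) = C ((R+d)/2) * C ((R-d)/2) := by rw [← C_mul]
    rw [e1, e2]; ring
  rw [key]; rfl

lemma MA_monic (γ : ℕ → ℝ) (s : ℕ) (a : ℝ) : (P γ s + C a).Monic := by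
  obtain ⟨hm, hd⟩ := P_monic γ s
  refine hm.add_of_left ?_
  calc (C a : ℝ[X]).degree ≤ 0 := degree_C_le
  _ < (P γ s).degree := by
      rw [degree_eq_natDegree hm.ne_zero, hd]
      exact_mod_cast pow_pos (by norm_num : (0:ℕ) < 2) s

lemma eval_on_roots (γ : ℕ → ℝ) (s : ℕ) (a : ℝ) (x : ℝ)
    (hx : x ∈ (P γ s + C a).roots) : (P γ s).eval x = -a := by
  have := isRoot_of_mem_roots hx
  simp only [IsRoot, eval_add, eval_C] at this
  linarith

lemma sum_fiber (γ : ℕ → ℝ) (s : ℕ) (a : ℝ) (u v : ℝ[X]) :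
    (((P γ s + C a).roots).map (P γ s * u + v).eval).sum =
      -a * (((P γ s + C a).roots).map u.eval).sum +
        (((P γ s + C a).roots).map v.eval).sum := by
  rw [← Multiset.sum_map_mul_left, ← Multiset.sum_map_add]
  refine congrArg Multiset.sum (Multiset.map_congr rfl ?_)
  intro x hx
  have h := eval_on_roots γ s a x hx
  simp only [eval_add, eval_mul, h]
  try ring

lemma sum_roots_const (γ : ℕ → ℝ) (hγ : ∀ s : ℕ, 0 < γ (s + 1) ∧ γ (s + 1) < 1 / 4) :
    ∀ s (q : ℝ[X]), q.natDegree < 2 ^ s → ∀ c₁ c₂, 0 ≤ c₁ → c₁ ≤ r γ s → 0 ≤ c₂ → c₂ ≤ r γ s →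
      ((P γ s + C c₁).roots.map q.eval).sum = ((P γ s + C c₂).roots.map q.eval).sum := by
  intro s
  induction s with
  | zero =>
    intro q hq c₁ c₂ _ _ _ _
    have hroots : ∀ c : ℝ, (P γ 0 + C c).roots = {1 - c} := by
      intro c
      have : P γ 0 + C c = X - C (1 - c) := by
        show X - 1 + C c = _
        rw [C_sub, C_1]; ring
      rw [this, roots_X_sub_C]
    have hq0 : q = C (q.coeff 0) := by
      have : q.natDegree = 0 := by omega
      exact (Polynomial.eq_C_of_natDegree_eq_zero this)
    rw [hroots, hroots, hq0]
    simp
  | succ s ih =>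
    intro q hq c₁ c₂ h01 h11 h02 h12
    have hm := (P_monic γ s).1
    have hd := (P_monic γ s).2
    have hrpos := (r_pos' γ hγ s).le
    set u := q /ₘ P γ s with hu_def
    set v := q %ₘ P γ s with hv_def
    have hq_eq : P γ s * u + v = q := by
      rw [hu_def, hv_def, add_comm]; exact modByMonic_add_div q (P γ s)
    have hu : u.natDegree < 2 ^ s := by
      rw [hu_def, natDegree_divByMonic q hm, hd]
      have : q.natDegree < 2 ^ (s+1) := hq
      rw [pow_succ] at this
      omega
    have hv : v.natDegree < 2 ^ s := by
      rcases eq_or_ne v 0 with h | h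
      · rw [h]; simpa using pow_pos (by norm_num : (0:ℕ) < 2) s
      · have := degree_modByMonic_lt q hm
        rw [degree_eq_natDegree hm.ne_zero, hd] at this
        exact (natDegree_lt_iff_degree_lt h).2 (by exact_mod_cast this)
    set U := ((P γ s + C 0).roots.map u.eval).sum with hU
    set V := ((P γ s + C 0).roots.map v.eval).sum with hV
    have fib : ∀ a, 0 ≤ a → a ≤ r γ s →
        ((P γ s + C a).roots.map q.eval).sum = -a * U + V := by
      intro a ha1 ha2
      rw [← hq_eq, sum_fiber]
      rw [ih u hu a 0 ha1 ha2 le_rfl hrpos, ih v hv a 0 ha1 ha2 le_rfl hrpos]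
    have key : ∀ c, 0 ≤ c → c ≤ r γ (s+1) →
        ((P γ (s+1) + C c).roots.map q.eval).sum = -(r γ s) * U + 2 * V := by
      intro c h0 h1
      obtain ⟨a, b, hb0, hba, har, habs, heq⟩ := factorP γ hγ s c h0 h1
      have hne : (P γ s + C a) * (P γ s + C b) ≠ 0 :=
        ((MA_monic γ s a).mul (MA_monic γ s b)).ne_zero
      rw [heq, roots_mul hne, Multiset.map_add, Multiset.sum_add,
        fib a (le_trans hb0 hba) har, fib b hb0 (le_trans hba har)]
      rw [← habs]; ring
    rw [key c₁ h01 h11, key c₂ h02 h12]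

lemma sum_vanish (γ : ℕ → ℝ) (hγ : ∀ s : ℕ, 0 < γ (s + 1) ∧ γ (s + 1) < 1 / 4) :
    ∀ t s, s < t → ∀ c, 0 ≤ c → c ≤ r γ t → ∀ q : ℝ[X], q.natDegree < 2 ^ s →
      ((P γ t + C c).roots.map
        (fun x => (P γ s + C (r γ s / 2)).eval x * q.eval x)).sum = 0 := by
  intro t
  induction t with
  | zero => omega
  | succ t ih =>
    intro s hst c h0 h1 q hq
    obtain ⟨a, b, hb0, hba, har, habs, heq⟩ := factorP γ hγ t c h0 h1
    have hne : (P γ t + C a) * (P γ t + C b) ≠ 0 :=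
      ((MA_monic γ t a).mul (MA_monic γ t b)).ne_zero
    rw [heq, roots_mul hne, Multiset.map_add, Multiset.sum_add]
    rcases Nat.lt_or_ge s t with h | h
    · rw [ih s h a (le_trans hb0 hba) har q hq, ih s h b hb0 (le_trans hba har) q hq]
      ring
    · have hst' : s = t := by omega
      subst hst'
      have fibeq : ∀ e : ℝ,
          ((P γ s + C e).roots.map
            (fun x => (P γ s + C (r γ s / 2)).eval x * q.eval x)).sum =
          (r γ s / 2 - e) * ((P γ s + C e).roots.map q.eval).sum := by
        intro e
        rw [← Multiset.sum_map_mul_left]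
        refine congrArg Multiset.sum (Multiset.map_congr rfl ?_)
        intro x hx
        have h := eval_on_roots γ s e x hx
        simp only [eval_add, eval_C, h]
        ring
      rw [fibeq a, fibeq b,
        sum_roots_const γ hγ s q hq a b (le_trans hb0 hba) har hb0 (le_trans hba har)]
      rw [← habs]; ring

lemma orth_M (γ : ℕ → ℝ) (hγ : ∀ s : ℕ, 0 < γ (s + 1) ∧ γ (s + 1) < 1 / 4)
    (μ : Measure ℝ)
    (hμconv : ∀ p : Polynomial ℝ,
      Tendsto (fun s => nuInt γ s (fun x => p.eval x)) atTop (nhds (∫ x, p.eval x ∂μ)))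
    (s : ℕ) (q : ℝ[X]) (hq : q.natDegree < 2 ^ s) :
    ∫ x, (P γ s + C (r γ s / 2)).eval x * q.eval x ∂μ = 0 := by
  set p := (P γ s + C (r γ s / 2)) * q with hp
  have h1 := hμconv p
  have h2 : ∀ t, s + 1 ≤ t → nuInt γ t (fun x => p.eval x) = 0 := by
    intro t ht
    have hr := r_pos' γ hγ t
    have := sum_vanish γ hγ t s (by omega) (r γ t / 2) (by linarith) (by linarith) q hq
    unfold nuInt
    rw [_root_.div_eq_zero_iff]
    left
    rw [← this]
    refine congrArg Multiset.sum (Multiset.map_congr rfl ?_)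
    intro x _
    simp [hp]
  have h3 : Tendsto (fun t => nuInt γ t fun x => p.eval x) atTop (nhds 0) := by
    refine Tendsto.congr' ?_ tendsto_const_nhds
    filter_upwards [eventually_atTop.2 ⟨s+1, fun t ht => (h2 t ht).symm⟩] with t ht using ht
  have h4 : ∫ x, p.eval x ∂μ = 0 := tendsto_nhds_unique h1 h3
  rw [← h4]
  refine integral_congr_ae (Filter.Eventually.of_forall fun x => ?_)
  simp [hp]

lemma Q_eq (γ : ℕ → ℝ) (hγ : ∀ s : ℕ, 0 < γ (s + 1) ∧ γ (s + 1) < 1 / 4)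
    (μ : Measure ℝ) [IsProbabilityMeasure μ]
    (hμint : ∀ p : Polynomial ℝ, Integrable (fun x => p.eval x) μ)
    (hμpos : ∀ p : Polynomial ℝ, p ≠ 0 → 0 < ∫ x, (p.eval x) ^ 2 ∂μ)
    (hμconv : ∀ p : Polynomial ℝ,
      Tendsto (fun s => nuInt γ s (fun x => p.eval x)) atTop (nhds (∫ x, p.eval x ∂μ)))
    (Q : ℕ → Polynomial ℝ) (hQmonic : ∀ n, (Q n).Monic) (hQdeg : ∀ n, (Q n).natDegree = n)
    (hQorth : ∀ n : ℕ, ∀ p : Polynomial ℝ, p.degree < (n : WithBot ℕ) →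
      ∫ x, (Q n).eval x * p.eval x ∂μ = 0)
    (s : ℕ) : Q (2 ^ s) = P γ s + C (r γ s / 2) := by
  set M := P γ s + C (r γ s / 2) with hM
  have hMm : M.Monic := MA_monic γ s _
  have hMd : M.natDegree = 2 ^ s := by
    rw [hM, natDegree_add_C, (P_monic γ s).2]
  by_contra hne
  set D := Q (2 ^ s) - M with hD
  have hD0 : D ≠ 0 := sub_ne_zero.2 hne
  have hDdeg : D.degree < ((2:ℕ) ^ s : WithBot ℕ) := by
    have := degree_sub_lt (q := M) ?_ (hQmonic (2^s)).ne_zero ?_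
    · rw [degree_eq_natDegree (hQmonic (2^s)).ne_zero, hQdeg] at this
      exact_mod_cast this
    · rw [degree_eq_natDegree (hQmonic (2^s)).ne_zero, degree_eq_natDegree hMm.ne_zero,
        hQdeg, hMd]
    · rw [(hQmonic (2^s)).leadingCoeff, hMm.leadingCoeff]
  have hDnat : D.natDegree < 2 ^ s := (natDegree_lt_iff_degree_lt hD0).2 (by exact_mod_cast hDdeg)
  have key : ∫ x, (D.eval x) ^ 2 ∂μ = 0 := by
    have e1 : ∫ x, (Q (2^s)).eval x * D.eval x ∂μ = 0 := hQorth (2^s) D hDdeg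
    have e2 : ∫ x, M.eval x * D.eval x ∂μ = 0 := orth_M γ hγ μ hμconv s D hDnat
    have e3 : ∀ x : ℝ, (D.eval x) ^ 2 = (Q (2^s)).eval x * D.eval x - M.eval x * D.eval x := by
      intro x; rw [hD]; simp [eval_sub]; ring
    calc ∫ x, (D.eval x) ^ 2 ∂μ
        = ∫ x, ((Q (2^s)).eval x * D.eval x - M.eval x * D.eval x) ∂μ := by
          exact integral_congr_ae (Filter.Eventually.of_forall fun x => e3 x)
      _ = (∫ x, (Q (2^s)).eval x * D.eval x ∂μ) - ∫ x, M.eval x * D.eval x ∂μ := by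
          refine integral_sub ?_ ?_
          · have := hμint (Q (2^s) * D)
            refine this.congr (Filter.Eventually.of_forall fun x => ?_)
            simp
          · have := hμint (M * D)
            refine this.congr (Filter.Eventually.of_forall fun x => ?_)
            simp
      _ = 0 := by rw [e1, e2, sub_zero]
  exact absurd key (ne_of_gt (hμpos D hD0))

lemma Q_sq (γ : ℕ → ℝ) (hγ : ∀ s : ℕ, 0 < γ (s + 1) ∧ γ (s + 1) < 1 / 4)
    (μ : Measure ℝ) [IsProbabilityMeasure μ]
    (hμint : ∀ p : Polynomial ℝ, Integrable (fun x => p.eval x) μ)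
    (hμpos : ∀ p : Polynomial ℝ, p ≠ 0 → 0 < ∫ x, (p.eval x) ^ 2 ∂μ)
    (hμconv : ∀ p : Polynomial ℝ,
      Tendsto (fun s => nuInt γ s (fun x => p.eval x)) atTop (nhds (∫ x, p.eval x ∂μ)))
    (Q : ℕ → Polynomial ℝ) (hQmonic : ∀ n, (Q n).Monic) (hQdeg : ∀ n, (Q n).natDegree = n)
    (hQorth : ∀ n : ℕ, ∀ p : Polynomial ℝ, p.degree < (n : WithBot ℕ) →
      ∫ x, (Q n).eval x * p.eval x ∂μ = 0)
    (s : ℕ) :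
    (Q (2 ^ s)) ^ 2 = Q (2 ^ (s+1)) + C ((r γ s) ^ 2 / 4 - r γ (s+1) / 2) := by
  rw [Q_eq γ hγ μ hμint hμpos hμconv Q hQmonic hQdeg hQorth s,
    Q_eq γ hγ μ hμint hμpos hμconv Q hQmonic hQdeg hQorth (s+1)]
  have e : P γ (s+1) = P γ s * (P γ s + C (r γ s)) := rfl
  rw [e]
  have c1 : (C (r γ s) : ℝ[X]) = C (r γ s / 2) + C (r γ s / 2) := by
    rw [← C_add]; exact congrArg C (by ring)
  have c2 : (C ((r γ s) ^ 2 / 4 - r γ (s+1) / 2) : ℝ[X]) =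
      C (r γ s / 2) * C (r γ s / 2) - C (r γ (s+1) / 2) := by
    rw [← C_mul, ← C_sub]; exact congrArg C (by ring)
  rw [c1, c2]; ring

lemma Q_norm (γ : ℕ → ℝ) (hγ : ∀ s : ℕ, 0 < γ (s + 1) ∧ γ (s + 1) < 1 / 4)
    (μ : Measure ℝ) [IsProbabilityMeasure μ]
    (hμint : ∀ p : Polynomial ℝ, Integrable (fun x => p.eval x) μ)
    (hμpos : ∀ p : Polynomial ℝ, p ≠ 0 → 0 < ∫ x, (p.eval x) ^ 2 ∂μ)
    (hμconv : ∀ p : Polynomial ℝ,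
      Tendsto (fun s => nuInt γ s (fun x => p.eval x)) atTop (nhds (∫ x, p.eval x ∂μ)))
    (Q : ℕ → Polynomial ℝ) (hQmonic : ∀ n, (Q n).Monic) (hQdeg : ∀ n, (Q n).natDegree = n)
    (hQorth : ∀ n : ℕ, ∀ p : Polynomial ℝ, p.degree < (n : WithBot ℕ) →
      ∫ x, (Q n).eval x * p.eval x ∂μ = 0)
    (s : ℕ) :
    ∫ x, ((Q (2 ^ s)).eval x) ^ 2 ∂μ = (r γ s) ^ 2 / 4 - r γ (s+1) / 2 := by
  set c := (r γ s) ^ 2 / 4 - r γ (s+1) / 2 with hc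
  have horth : ∫ x, (Q (2 ^ (s+1))).eval x * (1:ℝ[X]).eval x ∂μ = 0 := by
    refine hQorth (2 ^ (s+1)) 1 ?_
    rw [degree_one]
    exact_mod_cast pow_pos (by norm_num : (0:ℕ) < 2) (s+1)
  have horth' : ∫ x, (Q (2 ^ (s+1))).eval x ∂μ = 0 := by
    rw [← horth]
    exact integral_congr_ae (Filter.Eventually.of_forall fun x => by simp)
  have hsq := Q_sq γ hγ μ hμint hμpos hμconv Q hQmonic hQdeg hQorth s
  calc ∫ x, ((Q (2 ^ s)).eval x) ^ 2 ∂μ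
      = ∫ x, ((Q (2 ^ (s+1))).eval x + c) ∂μ := by
        refine integral_congr_ae (Filter.Eventually.of_forall fun x => ?_)
        have : ((Q (2 ^ s)) ^ 2).eval x = (Q (2 ^ (s+1)) + C c).eval x := by rw [hsq]
        simpa [eval_pow, eval_add, eval_C, sq] using this
    _ = (∫ x, (Q (2 ^ (s+1))).eval x ∂μ) + ∫ (_ : ℝ), c ∂μ := by
        refine integral_add (hμint _) (integrable_const c)
    _ = c := by rw [horth', integral_const]; simp


theorem stmt_7 (γ : ℕ → ℝ) (hγ : ∀ s : ℕ, 0 < γ (s + 1) ∧ γ (s + 1) < 1 / 4)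
    (μ : Measure ℝ) [IsProbabilityMeasure μ]
    (hμint : ∀ p : Polynomial ℝ, Integrable (fun x => p.eval x) μ)
    (hμpos : ∀ p : Polynomial ℝ, p ≠ 0 → 0 < ∫ x, (p.eval x) ^ 2 ∂μ)
    (hμconv : ∀ p : Polynomial ℝ,
      Tendsto (fun s => nuInt γ s (fun x => p.eval x)) atTop (nhds (∫ x, p.eval x ∂μ)))
    (Q : ℕ → Polynomial ℝ) (hQmonic : ∀ n, (Q n).Monic) (hQdeg : ∀ n, (Q n).natDegree = n)
    (hQorth : ∀ n : ℕ, ∀ p : Polynomial ℝ, p.degree < (n : WithBot ℕ) →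
      ∫ x, (Q n).eval x * p.eval x ∂μ = 0)
    (n : ℕ) (hn : 1 ≤ n) (sf idx : ℕ → ℕ)
    (hs1 : 0 < sf 1) (hsmono : ∀ k, 1 ≤ k → k < n → sf k < sf (k + 1))
    (hidx : ∀ k, 1 ≤ k → k ≤ n → idx k = 1 ∨ idx k = 2)
    (htop : idx n = 2) :
    ∫ x, ∏ k ∈ Finset.Icc 1 n, ((Q (2 ^ sf k)).eval x) ^ idx k ∂μ =
      (∫ x, ((Q (2 ^ sf n)).eval x) ^ 2 ∂μ) *
        ∫ x, ∏ k ∈ Finset.Icc 1 (n - 1), ((Q (2 ^ sf k)).eval x) ^ idx k ∂μ := by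
  obtain ⟨m, rfl⟩ : ∃ m, n = m + 1 := ⟨n - 1, (Nat.succ_pred_eq_of_pos hn).symm⟩
  simp only [Nat.add_sub_cancel]
  set B : ℝ[X] := ∏ k ∈ Finset.Icc 1 m, (Q (2 ^ sf k)) ^ idx k with hB
  have hBmonic : B.Monic := monic_prod_of_monic _ _ (fun k _ => (hQmonic _).pow _)
  -- degree bound for partial products
  have hdeg : ∀ j, j ≤ m →
      (∏ k ∈ Finset.Icc 1 j, (Q (2 ^ sf k)) ^ idx k).natDegree + 2 ≤ 2 ^ (sf (j+1) + 1) := by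
    intro j
    induction j with
    | zero =>
      intro _
      simp only [show Finset.Icc 1 0 = ∅ from rfl, Finset.prod_empty, natDegree_one]
      have : (2:ℕ) ^ 1 ≤ 2 ^ (sf 1 + 1) := Nat.pow_le_pow_right (by norm_num) (by omega)
      simpa using this
    | succ j ih =>
      intro hj
      have ihj := ih (by omega)
      rw [Finset.prod_Icc_succ_top (by omega)]
      have hmon : (∏ k ∈ Finset.Icc 1 j, (Q (2 ^ sf k)) ^ idx k).Monic :=
        monic_prod_of_monic _ _ (fun k _ => (hQmonic _).pow _)
      rw [hmon.natDegree_mul ((hQmonic _).pow _), natDegree_pow, hQdeg]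
      have hidxj : idx (j+1) ≤ 2 := by
        rcases hidx (j+1) (by omega) (by omega) with h | h <;> omega
      have hsf : sf (j+1) + 1 ≤ sf (j+1+1) := by
        have := hsmono (j+1) (by omega) (by omega)
        omega
      have h1 : idx (j+1) * 2 ^ sf (j+1) ≤ 2 ^ (sf (j+1) + 1) := by
        rw [pow_succ]
        calc idx (j+1) * 2 ^ sf (j+1) ≤ 2 * 2 ^ sf (j+1) :=
          Nat.mul_le_mul_right _ hidxj
        _ = 2 ^ sf (j+1) * 2 := by ring
      have h2 : (2:ℕ) ^ (sf (j+1) + 2) ≤ 2 ^ (sf (j+1+1) + 1) :=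
        Nat.pow_le_pow_right (by norm_num) (by omega)
      have h3 : (2:ℕ) ^ (sf (j+1) + 2) = 2 ^ (sf (j+1) + 1) + 2 ^ (sf (j+1) + 1) := by
        rw [pow_succ]; ring
      omega
  have hBdeg : B.natDegree < 2 ^ (sf (m+1) + 1) := by
    rw [hB]
    have := hdeg m le_rfl
    omega
  set c := (r γ (sf (m+1))) ^ 2 / 4 - r γ (sf (m+1) + 1) / 2 with hc
  have hQorthB : ∫ x, (Q (2 ^ (sf (m+1) + 1))).eval x * B.eval x ∂μ = 0 := by
    refine hQorth _ B ?_
    calc B.degree ≤ (B.natDegree : WithBot ℕ) := degree_le_natDegree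
    _ < ((2 ^ (sf (m+1) + 1) : ℕ) : WithBot ℕ) := by exact_mod_cast hBdeg
  have hsq := Q_sq γ hγ μ hμint hμpos hμconv Q hQmonic hQdeg hQorth (sf (m+1))
  have hnorm := Q_norm γ hγ μ hμint hμpos hμconv Q hQmonic hQdeg hQorth (sf (m+1))
  rw [hnorm]
  calc ∫ x, ∏ k ∈ Finset.Icc 1 (m+1), ((Q (2 ^ sf k)).eval x) ^ idx k ∂μ
      = ∫ x, ((Q (2 ^ (sf (m+1) + 1))).eval x * B.eval x + c * B.eval x) ∂μ := by
        have hpt : ∀ x : ℝ, ∏ k ∈ Finset.Icc 1 (m+1), ((Q (2 ^ sf k)).eval x) ^ idx k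
            = (Q (2 ^ (sf (m+1) + 1))).eval x * B.eval x + c * B.eval x := by
          intro x
          rw [Finset.prod_Icc_succ_top (by omega), htop]
          have h1 : ((Q (2 ^ sf (m+1))).eval x) ^ 2 = ((Q (2 ^ sf (m+1))) ^ 2).eval x := by
            rw [eval_pow]
          have h2 : ((Q (2 ^ sf (m+1))) ^ 2).eval x
              = (Q (2 ^ (sf (m+1) + 1))).eval x + c := by
            rw [hsq]; simp [hc]
          have h3 : ∏ k ∈ Finset.Icc 1 m, ((Q (2 ^ sf k)).eval x) ^ idx k = B.eval x := by
            rw [hB, eval_prod]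
            exact Finset.prod_congr rfl fun k _ => by rw [eval_pow]
          rw [h3, mul_comm, h1, h2]
          ring
        exact integral_congr_ae (Filter.Eventually.of_forall hpt)
    _ = (∫ x, (Q (2 ^ (sf (m+1) + 1))).eval x * B.eval x ∂μ)
          + ∫ x, c * B.eval x ∂μ := by
        refine integral_add ?_ ?_
        · refine (hμint (Q (2 ^ (sf (m+1) + 1)) * B)).congr
            (Filter.Eventually.of_forall fun x => ?_)
          simp
        · refine ((hμint B).const_mul c).congr
            (Filter.Eventually.of_forall fun x => rfl)
    _ = c * ∫ x, B.eval x ∂μ := by rw [hQorthB, integral_const_mul]; ring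
    _ = c * ∫ x, ∏ k ∈ Finset.Icc 1 m, ((Q (2 ^ sf k)).eval x) ^ idx k ∂μ := by
        congr 1
        have hpt : ∀ x : ℝ, B.eval x
            = ∏ k ∈ Finset.Icc 1 m, ((Q (2 ^ sf k)).eval x) ^ idx k := by
          intro x
          rw [hB, eval_prod]
          exact Finset.prod_congr rfl fun k _ => by rw [eval_pow]
        exact integral_congr_ae (Filter.Eventually.of_forall hpt)
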